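/- Let G ≤ A(3) be a subgroup whose twist part contains an element acting by -I on some factor, acting on U³ as in the toroidal orbifold setup. If an element h = (ε, γ, σ) of A(3) (with ε ∈ T⁶, γ ∈ Γ³, σ ∈ S3) normalizes G, then ε lies in the subgroup (Z/4)⁶ of points of order dividing 4. -/

import Mathlib

/-- The 2-torus `T² = (ℝ/ℤ)²`. -/
abbrev T2 : Type := AddCircle (1 : ℝ) × AddCircle (1 : ℝ)

/-- The element `-I` of `SL(2,ℤ)`. -/
def negI : Matrix.SpecialLinearGroup (Fin 2) ℤ := -1

/-- Let `A = T² ⋊ SL(2,ℤ)` (action encoded by `φ`) and `A⁽³⁾ = A³ ⋊ S₃` (permutation action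
encoded by `ψ`).  Let `G ≤ A⁽³⁾` be a subgroup each of whose elements is of the form `(δ, ι, 1)`
with `δ` a point of order dividing 2 of `T⁶` and `ι` a pure twist (`±I` on the three factors,
with an even number of `-I`'s), and suppose that for each factor `i`, `G` contains an element
acting by `-I` on the `i`-th factor.  If `h = (ε, γ, σ) ∈ A⁽³⁾` normalizes `G`, then `ε` lies
in the subgroup `(ℤ/4)⁶` of points of order dividing 4. -/
theorem normalizer_translation_component_four_torsion
    (φ : Matrix.SpecialLinearGroup (Fin 2) ℤ →* MulAut (Multiplicative T2))
    (hφ : ∀ (γ : Matrix.SpecialLinearGroup (Fin 2) ℤ) (ε : T2),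
      Multiplicative.toAdd (φ γ (Multiplicative.ofAdd ε)) =
        ((γ.1 0 0) • ε.1 - (γ.1 0 1) • ε.2, -((γ.1 1 0) • ε.1) + (γ.1 1 1) • ε.2))
    (ψ : Equiv.Perm (Fin 3) →*
      MulAut (Fin 3 → Multiplicative T2 ⋊[φ] Matrix.SpecialLinearGroup (Fin 2) ℤ))
    (hψ : ∀ (σ : Equiv.Perm (Fin 3))
      (f : Fin 3 → Multiplicative T2 ⋊[φ] Matrix.SpecialLinearGroup (Fin 2) ℤ) (i : Fin 3),
      ψ σ f i = f (σ⁻¹ i))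
    (G : Subgroup ((Fin 3 → Multiplicative T2 ⋊[φ] Matrix.SpecialLinearGroup (Fin 2) ℤ)
      ⋊[ψ] Equiv.Perm (Fin 3)))
    (hGshape : ∀ g ∈ G, g.right = 1 ∧
      (∀ i : Fin 3, 2 • Multiplicative.toAdd (g.left i).left = 0) ∧
      ∃ s : Finset (Fin 3), Even s.card ∧
        ∀ i : Fin 3, (g.left i).right = if i ∈ s then negI else 1)
    (hGtwist : ∀ i : Fin 3, ∃ g ∈ G, (g.left i).right = negI)
    (h : (Fin 3 → Multiplicative T2 ⋊[φ] Matrix.SpecialLinearGroup (Fin 2) ℤ)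
      ⋊[ψ] Equiv.Perm (Fin 3))
    (hnorm : ∀ g ∈ G, h * g * h⁻¹ ∈ G) :
    ∀ i : Fin 3, 4 • Multiplicative.toAdd ((h.left i).left) = 0 := by
  -- φ negI is inversion
  have hneg : ∀ x : Multiplicative T2, φ negI x = x⁻¹ := by
    intro x
    apply Multiplicative.toAdd.injective
    have := hφ negI (Multiplicative.toAdd x)
    simp only [ofAdd_toAdd] at this
    rw [this]
    have h00 : (negI.1 0 0) = -1 := by simp [negI, Matrix.one_apply]
    have h01 : (negI.1 0 1) = 0 := by simp [negI, Matrix.one_apply]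
    have h10 : (negI.1 1 0) = 0 := by simp [negI, Matrix.one_apply]
    have h11 : (negI.1 1 1) = -1 := by simp [negI, Matrix.one_apply]
    rw [h00, h01, h10, h11]
    simp [Prod.ext_iff]
  intro i
  obtain ⟨g, hgG, hgtw⟩ := hGtwist (h.right⁻¹ i)
  obtain ⟨hgr, hgtor, -⟩ := hGshape g hgG
  obtain ⟨-, hktor, -⟩ := hGshape _ (hnorm g hgG)
  have h2 := hktor i
  have hcomp : ∀ x, φ (h.left i).right (φ (h.left i).right⁻¹ x) = x := by
    intro x
    rw [← MulAut.mul_apply, ← map_mul, mul_inv_cancel, map_one, MulAut.one_apply]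
  have hcomp2 : ∀ x, φ (h.left i).right ((φ (h.left i).right)⁻¹ x) = x := by
    intro x
    rw [← MulAut.mul_apply, mul_inv_cancel, MulAut.one_apply]
  -- compute the conjugate's left component at i
  have key : ((h * g * h⁻¹).left i).left
      = (h.left i).left * (φ (h.left i).right) (g.left (h.right⁻¹ i)).left * (h.left i).left := by
    have e1 : (h * g * h⁻¹).left i = h.left i * (g.left (h.right⁻¹ i) * (h.left i)⁻¹) := by
      simp only [SemidirectProduct.mul_left, SemidirectProduct.mul_right,
        SemidirectProduct.inv_left, hgr, mul_one, map_one, MulAut.one_apply, Pi.mul_apply,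
        Pi.inv_apply, hψ, inv_inv, Equiv.Perm.inv_def, Equiv.symm_symm, Equiv.apply_symm_apply, mul_assoc]
    rw [e1, SemidirectProduct.mul_left, SemidirectProduct.mul_left,
      SemidirectProduct.inv_left, map_mul, hgtw, hneg]
    simp only [map_inv, inv_inv, hcomp, hcomp2, mul_assoc]
  rw [key] at h2
  have hAd : (2 : ℕ) • Multiplicative.toAdd
      ((φ (h.left i).right) (g.left (h.right⁻¹ i)).left) = 0 := by
    have hA := hφ (h.left i).right (Multiplicative.toAdd (g.left (h.right⁻¹ i)).left)
    simp only [ofAdd_toAdd] at hA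
    rw [hA]
    have hdt := hgtor (h.right⁻¹ i)
    have hd1 : (2 : ℕ) • (Multiplicative.toAdd (g.left (h.right⁻¹ i)).left).1 = 0 :=
      congrArg Prod.fst hdt
    have hd2 : (2 : ℕ) • (Multiplicative.toAdd (g.left (h.right⁻¹ i)).left).2 = 0 :=
      congrArg Prod.snd hdt
    rw [Prod.smul_mk, Prod.mk_eq_zero]
    constructor
    · rw [smul_sub, smul_comm (2:ℕ), smul_comm (2:ℕ), hd1, hd2]; simp
    · rw [smul_add, smul_neg, smul_comm (2:ℕ), smul_comm (2:ℕ), hd1, hd2]; simp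
  rw [toAdd_mul, toAdd_mul, smul_add, smul_add, hAd, add_zero] at h2
  have h4 : (4 : ℕ) • Multiplicative.toAdd ((h.left i).left)
      = (2 : ℕ) • Multiplicative.toAdd ((h.left i).left)
        + (2 : ℕ) • Multiplicative.toAdd ((h.left i).left) := by
    rw [← add_nsmul]
  rw [h4]
  exact h2
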